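/- Let f be a Fréchet differentiable semistrictly quasiconvex function on an open convex set S in a real Banach space E satisfying: x, y ∈ S and ⟨∇f(x), y − x⟩ = 0 imply f(y) ≥ f(x). Then f is pseudoconvex on S. -/

import Mathlib

def SemistrictlyQuasiconvex {E : Type*} [NormedAddCommGroup E] [NormedSpace ℝ E]
    (S : Set E) (f : E → ℝ) : Prop :=
  ∀ x ∈ S, ∀ y ∈ S, ∀ l ∈ Set.Ioo (0:ℝ) 1,
    f y < f x → f (x + l • (y - x)) < f x

theorem stmt_17 {E : Type*} [NormedAddCommGroup E] [NormedSpace ℝ E] [CompleteSpace E]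
    {S : Set E} (hSo : IsOpen S) (hSc : Convex ℝ S)
    (f : E → ℝ) (f' : E → E →L[ℝ] ℝ)
    (hdiff : ∀ x ∈ S, HasFDerivAt f (f' x) x)
    (hssq : SemistrictlyQuasiconvex S f)
    (himp : ∀ x ∈ S, ∀ y ∈ S, f' x (y - x) = 0 → f x ≤ f y) :
    ∀ x ∈ S, ∀ y ∈ S, f y < f x → f' x (y - x) < 0 := by
  intro x hx y hy hlt
  by_contra h
  push_neg at h
  rcases h.lt_or_eq with hpos | heq
  · -- 0 < f' x (y - x)
    have hline : HasDerivAt (fun t : ℝ => x + t • (y - x)) (y - x) 0 := by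
      simpa using ((hasDerivAt_id (0:ℝ)).smul_const (y - x)).const_add x
    have hg : HasDerivAt (fun t : ℝ => f (x + t • (y - x))) (f' x (y - x)) 0 := by
      have h0 : HasFDerivAt f (f' x) ((fun t : ℝ => x + t • (y - x)) 0) := by
        simpa using hdiff x hx
      exact h0.comp_hasDerivAt 0 hline
    have hslope := hasDerivAt_iff_tendsto_slope.1 hg
    have hslope' : Filter.Tendsto (slope (fun t : ℝ => f (x + t • (y - x))) 0)
        (nhdsWithin 0 (Set.Ioi 0)) (nhds (f' x (y - x))) :=
      hslope.mono_left (nhdsWithin_mono 0 (fun t ht => ne_of_gt ht))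
    have hev : ∀ᶠ t in nhdsWithin (0:ℝ) (Set.Ioi 0),
        0 < slope (fun t : ℝ => f (x + t • (y - x))) 0 t :=
      hslope'.eventually (eventually_gt_nhds hpos)
    have hev1 : ∀ᶠ t in nhdsWithin (0:ℝ) (Set.Ioi 0), t < 1 :=
      eventually_nhdsWithin_of_eventually_nhds (eventually_lt_nhds one_pos)
    have hev0 : ∀ᶠ t in nhdsWithin (0:ℝ) (Set.Ioi 0), 0 < t :=
      eventually_mem_nhdsWithin
    obtain ⟨t, hst, ht1, ht0⟩ := (hev.and (hev1.and hev0)).exists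
    have hst' : 0 < (f (x + t • (y - x)) - f x) / t := by
      simpa [slope_def_field, div_eq_inv_mul] using hst
    have hgt : f x < f (x + t • (y - x)) := by
      have := mul_pos hst' ht0
      rw [div_mul_cancel₀ _ (ne_of_gt ht0)] at this
      linarith
    have hlt' := hssq x hx y hy t ⟨ht0, ht1⟩ hlt
    linarith
  · exact absurd (himp x hx y hy heq.symm) (not_le.2 hlt)
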